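/- Suppose AW = αW for some real α, and there exist real numbers λ₁, λ₂ with λ₁λ₂ + c = 0 and a subspace V ⊆ W^⊥ such that W^⊥ = V ⊕ φ(V), AX = λ₁X for all X ∈ V, and AY = λ₂Y for all Y ∈ φ(V) (the situation of a type B homogeneous Hopf hypersurface). Then (φ∘A)²X = cX for all X ∈ W^⊥, S*X = (2n−1)c·X for all X ∈ W^⊥, and trace S* = 2(n−1)(2n−1)c; in particular the *-Einstein condition holds. -/

import Mathlib

open scoped InnerProductSpace

/-- for the shape operator of a type B homogeneous Hopf hypersurface
(AW = αW, W^⊥ = V ⊕ φ(V) with A = λ₁ on V, A = λ₂ on φ(V), λ₁λ₂ + c = 0), one has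
(φ∘A)²X = cX and S*X = (2n−1)c·X for X ∈ W^⊥, and trace S* = 2(n−1)(2n−1)c; in
particular the *-Einstein condition holds. -/
theorem type_B_star_einstein
    {n : ℕ} (hn : 2 ≤ n)
    {E : Type*} [NormedAddCommGroup E] [InnerProductSpace ℝ E] [FiniteDimensional ℝ E]
    (hdim : Module.finrank ℝ E = 2 * n - 1)
    (W : E) (hW : ‖W‖ = 1)
    (φ : E →ₗ[ℝ] E) (hφskew : ∀ x y : E, ⟪φ x, y⟫_ℝ = - ⟪x, φ y⟫_ℝ)
    (hφW : φ W = 0) (hφφ : ∀ X : E, φ (φ X) = -X + ⟪X, W⟫_ℝ • W)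
    (c : ℝ) (hc : c ≠ 0)
    (A : E →ₗ[ℝ] E) (hA : ∀ x y : E, ⟪A x, y⟫_ℝ = ⟪x, A y⟫_ℝ)
    (α : ℝ) (hAW : A W = α • W)
    (lam1 lam2 : ℝ) (hlam : lam1 * lam2 + c = 0)
    (V : Submodule ℝ E)
    (hVperp : V ≤ (Submodule.span ℝ ({W} : Set E))ᗮ)
    (hdisj : Disjoint V (V.map φ))
    (hsum : V ⊔ V.map φ = (Submodule.span ℝ ({W} : Set E))ᗮ)
    (hAV : ∀ X ∈ V, A X = lam1 • X)
    (hAφV : ∀ Y ∈ V.map φ, A Y = lam2 • Y)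
    (Sstar : E →ₗ[ℝ] E)
    (hS : Sstar = -((2 * (n : ℝ) * c) • (φ ∘ₗ φ) + (φ ∘ₗ A) ∘ₗ (φ ∘ₗ A))) :
    (∀ X : E, ⟪X, W⟫_ℝ = 0 →
        ((φ ∘ₗ A) ∘ₗ (φ ∘ₗ A)) X = c • X ∧ Sstar X = ((2 * (n : ℝ) - 1) * c) • X) ∧
    LinearMap.trace ℝ E Sstar = 2 * ((n : ℝ) - 1) * (2 * (n : ℝ) - 1) * c ∧
    (∀ X Y : E, ⟪X, W⟫_ℝ = 0 → ⟪Y, W⟫_ℝ = 0 →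
        ⟪Sstar X, Y⟫_ℝ = ((2 * (n : ℝ) - 1) * c) * ⟪X, Y⟫_ℝ) := by
  have hWW : ⟪W, W⟫_ℝ = 1 := by
    rw [real_inner_self_eq_norm_sq, hW]; norm_num
  have hl : lam1 * lam2 = -c := by linarith
  have hVorth : ∀ v ∈ V, ⟪v, W⟫_ℝ = 0 := by
    intro v hv
    have hm : W ∈ Submodule.span ℝ ({W} : Set E) := Submodule.mem_span_singleton_self W
    exact (Submodule.mem_orthogonal' _ v).mp (hVperp hv) W hm
  -- key pointwise computation
  have key : ∀ X : E, ⟪X, W⟫_ℝ = 0 → ((φ ∘ₗ A) ∘ₗ (φ ∘ₗ A)) X = c • X := by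
    intro X hX
    have hXmem : X ∈ V ⊔ V.map φ := by
      rw [hsum]
      intro y hy
      rw [Submodule.mem_span_singleton] at hy
      obtain ⟨r, rfl⟩ := hy
      rw [real_inner_smul_left, real_inner_comm, hX, mul_zero]
    obtain ⟨v, hv, m, hm, rfl⟩ := Submodule.mem_sup.mp hXmem
    obtain ⟨u, hu, rfl⟩ := hm
    have hcv : ((φ ∘ₗ A) ∘ₗ (φ ∘ₗ A)) v = c • v := by
      simp only [LinearMap.comp_apply]
      rw [hAV v hv, map_smul, map_smul, hAφV _ ⟨v, hv, rfl⟩, map_smul, map_smul,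
        hφφ v, hVorth v hv, smul_smul, hl]
      module
    have hcu : ((φ ∘ₗ A) ∘ₗ (φ ∘ₗ A)) (φ u) = c • (φ u) := by
      simp only [LinearMap.comp_apply]
      rw [hAφV _ ⟨u, hu, rfl⟩, map_smul, hφφ u, hVorth u hu]
      have e1 : lam2 • (-u + (0:ℝ) • W) = (-lam2) • u := by module
      rw [e1, map_smul, hAV u hu, map_smul, map_smul, smul_smul]
      rw [show -lam2 * lam1 = c by linarith]
    rw [map_add, hcv, hcu, smul_add]
  -- Sstar on W^⊥
  have keyS : ∀ X : E, ⟪X, W⟫_ℝ = 0 → Sstar X = ((2 * (n : ℝ) - 1) * c) • X := by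
    intro X hX
    rw [hS]
    simp only [LinearMap.neg_apply, LinearMap.add_apply, LinearMap.smul_apply,
      LinearMap.comp_apply]
    have h1 : φ (φ X) = -X := by rw [hφφ X, hX]; module
    have h2 := key X hX
    simp only [LinearMap.comp_apply] at h2
    rw [h1, h2]
    module
  -- Sstar W = 0
  have hSW : Sstar W = 0 := by
    rw [hS]
    simp only [LinearMap.neg_apply, LinearMap.add_apply, LinearMap.smul_apply,
      LinearMap.comp_apply]
    have h1 : φ (φ W) = 0 := by rw [hφW, map_zero]
    rw [h1, hAW, map_smul, hφW]
    simp
  -- Sstar as a scalar multiple of (id - projection onto W)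
  have hSform : Sstar = ((2 * (n : ℝ) - 1) * c) •
      (LinearMap.id - LinearMap.smulRight (innerₛₗ ℝ W : E →ₗ[ℝ] ℝ) W) := by
    ext x
    have hx : x = (x - ⟪x, W⟫_ℝ • W) + ⟪x, W⟫_ℝ • W := by module
    have hperp : ⟪x - ⟪x, W⟫_ℝ • W, W⟫_ℝ = 0 := by
      rw [inner_sub_left, real_inner_smul_left, hWW]; ring
    calc Sstar x = Sstar (x - ⟪x, W⟫_ℝ • W) + ⟪x, W⟫_ℝ • Sstar W := by
          rw [← map_smul, ← map_add, ← hx]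
      _ = ((2 * (n : ℝ) - 1) * c) • (x - ⟪x, W⟫_ℝ • W) := by
          rw [keyS _ hperp, hSW, smul_zero, add_zero]
      _ = _ := by
          simp only [LinearMap.smul_apply, LinearMap.sub_apply, LinearMap.id_apply,
            LinearMap.smulRight_apply, innerₛₗ_apply_apply]
          rw [real_inner_comm W x]
  -- trace of the rank-one projection
  have htrQ : LinearMap.trace ℝ E (LinearMap.smulRight (innerₛₗ ℝ W : E →ₗ[ℝ] ℝ) W)
      = (1 : ℝ) := by
    have : LinearMap.smulRight (innerₛₗ ℝ W : E →ₗ[ℝ] ℝ) W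
        = dualTensorHom ℝ E E ((innerₛₗ ℝ W : E →ₗ[ℝ] ℝ) ⊗ₜ W) := by
      ext x; simp [dualTensorHom_apply]
    rw [this, LinearMap.trace_eq_contract_apply]
    simpa using hWW
  have hcast : (Module.finrank ℝ E : ℝ) = 2 * (n : ℝ) - 1 := by
    rw [hdim]
    have h1 : (1:ℕ) ≤ 2 * n := by omega
    push_cast [Nat.cast_sub h1]
    ring
  refine ⟨fun X hX => ⟨key X hX, keyS X hX⟩, ?_, ?_⟩
  · rw [hSform, map_smul, map_sub, htrQ, LinearMap.trace_id, hcast]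
    simp only [smul_eq_mul]
    ring
  · intro X Y hX hY
    rw [keyS X hX, real_inner_smul_left]
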